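/- Let x, y ∈ ℕ, let S be a finite set of functions f_i(z) = a_i·z + b_i with a_i, b_i ∈ ℤ and a_i > 0, let k ∈ ℤ with k > 0, let g(z) = z − k, and let F = S ∪ {g}. Then x →_F,+ y if and only if there exists z ∈ ℤ with z ≥ y, z ≡ y (mod k), and x →_S,+ z. -/

import Mathlib

/-- Apply the composition given by the tuple `L = (f₁, …, f_K)` of affine functions
(encoded by coefficient pairs `(a, b)`, i.e. `z ↦ a·z + b`), viewed as `f_K ∘ ⋯ ∘ f₁`. -/
def applyComp (L : List (ℤ × ℤ)) (x : ℤ) : ℤ := L.foldl (fun z p => p.1 * z + p.2) x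

/-- `x →_F,+ y`: there is an `F`-composition, valid with respect to `x` (every integer in
its orbit at `x` is nonnegative), mapping `x` to `y`. -/
def ReachesPos (F : Finset (ℤ × ℤ)) (x y : ℤ) : Prop :=
  ∃ L : List (ℤ × ℤ), (∀ p ∈ L, p ∈ F) ∧ (∀ t, t <+: L → 0 ≤ applyComp t x) ∧
    applyComp L x = y

lemma applyComp_nil (x : ℤ) : applyComp [] x = x := rfl

lemma applyComp_cons (p : ℤ × ℤ) (L : List (ℤ × ℤ)) (x : ℤ) :
    applyComp (p :: L) x = applyComp L (p.1 * x + p.2) := rfl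

lemma applyComp_append (L R : List (ℤ × ℤ)) (x : ℤ) :
    applyComp (L ++ R) x = applyComp R (applyComp L x) := by
  simp [applyComp, List.foldl_append]

lemma applyComp_replicate (j : ℕ) (k w : ℤ) :
    applyComp (List.replicate j ((1 : ℤ), -k)) w = w - j * k := by
  induction j generalizing w with
  | zero => simp [applyComp_nil]
  | succ n ih =>
      rw [List.replicate_succ, applyComp_cons, ih]
      push_cast
      ring

lemma applyComp_add (M : List (ℤ × ℤ)) (h : ∀ p ∈ M, 0 < p.1) (x d : ℤ) :
    ∃ c : ℤ, 1 ≤ c ∧ applyComp M (x + d) = applyComp M x + c * d := by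
  induction M generalizing x d with
  | nil => exact ⟨1, le_refl _, by simp [applyComp_nil]⟩
  | cons p M ih =>
      obtain ⟨c, hc, hcomp⟩ := ih (fun q hq => h q (List.mem_cons_of_mem _ hq))
        (p.1 * x + p.2) (p.1 * d)
      refine ⟨c * p.1, ?_, ?_⟩
      · have hp := h p (List.mem_cons_self)
        nlinarith
      · rw [applyComp_cons, applyComp_cons]
        have : p.1 * (x + d) + p.2 = (p.1 * x + p.2) + p.1 * d := by ring
        rw [this, hcomp]
        ring

lemma fwd_aux (S : Finset (ℤ × ℤ)) (hS : ∀ p ∈ S, 0 < p.1) (k : ℤ) (hk : 0 < k)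
    (L : List (ℤ × ℤ)) : ∀ x : ℤ, 0 ≤ x →
    (∀ p ∈ L, p ∈ insert ((1 : ℤ), -k) S) →
    (∀ t, t <+: L → 0 ≤ applyComp t x) →
    ∃ z : ℤ, applyComp L x ≤ z ∧ z ≡ applyComp L x [ZMOD k] ∧ ReachesPos S x z := by
  induction L with
  | nil =>
      intro x hx _ _
      exact ⟨x, le_refl _, Int.ModEq.refl _,
        ⟨[], by simp, fun t ht => by simp [List.prefix_nil.mp ht, applyComp_nil, hx], rfl⟩⟩
  | cons p L ih =>
      intro x hx hmem hval
      set x1 := p.1 * x + p.2 with hx1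
      have hx1nn : 0 ≤ x1 := by
        have := hval [p] ⟨L, rfl⟩
        simpa [applyComp_cons, applyComp_nil] using this
      obtain ⟨z, hz1, hz2, M, hM, hMval, hMz⟩ :=
        ih x1 hx1nn (fun q hq => hmem q (List.mem_cons_of_mem _ hq))
          (fun t ht => by
            have := hval (p :: t) (by simpa using ht)
            simpa [applyComp_cons] using this)
      rcases Finset.mem_insert.mp (hmem p (List.mem_cons_self)) with hp | hp
      · -- p = (1, -k) : shift
        have hx1eq : x1 = x + (-k) := by rw [hx1, hp]; ring
        have hMSpos : ∀ q ∈ M, 0 < q.1 := fun q hq => hS q (hM q hq)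
        obtain ⟨c, hc, hcomp⟩ := applyComp_add M hMSpos (x + (-k)) k
        have hxk : x + -k + k = x := by ring
        refine ⟨applyComp M x, ?_, ?_, M, hM, ?_, rfl⟩
        · have : applyComp M x = z + c * k := by
            rw [← hMz, hx1eq, ← hcomp, hxk]
          rw [applyComp_cons, ← hx1]
          nlinarith
        · have : applyComp M x = z + c * k := by
            rw [← hMz, hx1eq, ← hcomp, hxk]
          rw [applyComp_cons, ← hx1]
          refine Int.ModEq.trans ?_ hz2
          rw [this]
          exact (Int.modEq_iff_dvd.mpr ⟨-c, by ring⟩)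
        · intro t ht
          have htM : ∀ q ∈ t, 0 < q.1 := fun q hq =>
            hMSpos q (ht.sublist.mem hq)
          obtain ⟨c', hc', hcomp'⟩ := applyComp_add t htM (x + (-k)) k
          have h0 : 0 ≤ applyComp t (x + -k) := by
            rw [← hx1eq]; exact hMval t ht
          rw [← hxk, hcomp']
          nlinarith
      · -- p ∈ S
        refine ⟨z, ?_, ?_, p :: M, ?_, ?_, ?_⟩
        · rw [applyComp_cons]; exact hz1
        · rw [applyComp_cons]; exact hz2
        · intro q hq
          rcases List.mem_cons.mp hq with h | h
          · rw [h]; exact hp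
          · exact hM q h
        · intro t ht
          match t, ht with
          | [], _ => simpa [applyComp_nil] using hx
          | q :: t', ht =>
              obtain ⟨r, hr⟩ := ht
              have hq : q = p := by
                have := congrArg (fun l => l.head?) hr
                simpa using this
              have ht' : t' <+: M := by
                subst hq
                have : q :: (t' ++ r) = q :: M := by simpa using hr
                exact ⟨r, by injection this⟩
              rw [hq, applyComp_cons, ← hx1]
              exact hMval t' ht'
        · rw [applyComp_cons, ← hx1]; exact hMz

/-- For `x, y ∈ ℕ`, a finite set `S` of functions `fᵢ(z) = aᵢ·z + bᵢ` with `aᵢ > 0`,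
`k > 0`, `g(z) = z − k` (encoded as the pair `(1, -k)`), and `F = S ∪ {g}`:
`x →_F,+ y` iff `x →_S,+ z` for some `z ≥ y` with `z ≡ y (mod k)`. -/
theorem reachesPos_union_shift_iff (x y : ℕ) (S : Finset (ℤ × ℤ))
    (hS : ∀ p ∈ S, 0 < p.1) (k : ℤ) (hk : 0 < k) :
    ReachesPos (insert ((1 : ℤ), -k) S) (x : ℤ) (y : ℤ) ↔
      ∃ z : ℤ, (y : ℤ) ≤ z ∧ z ≡ (y : ℤ) [ZMOD k] ∧ ReachesPos S (x : ℤ) z := by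
  constructor
  · rintro ⟨L, hmem, hval, hL⟩
    obtain ⟨z, hz1, hz2, hreach⟩ := fwd_aux S hS k hk L x (Int.natCast_nonneg x) hmem hval
    exact ⟨z, by rw [← hL]; exact hz1, by rw [← hL]; exact hz2, hreach⟩
  · rintro ⟨z, hyz, hmod, M, hM, hMval, hMz⟩
    obtain ⟨m, hm⟩ := Int.modEq_iff_dvd.mp hmod.symm
    -- hm : z - y = k * m
    have hm0 : 0 ≤ m := by nlinarith
    obtain ⟨n, rfl⟩ := Int.eq_ofNat_of_zero_le hm0
    refine ⟨M ++ List.replicate n ((1 : ℤ), -k), ?_, ?_, ?_⟩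
    · intro p hp
      rcases List.mem_append.mp hp with h | h
      · exact Finset.mem_insert_of_mem (hM p h)
      · rw [List.eq_of_mem_replicate h]; exact Finset.mem_insert_self _ _
    · intro t ht
      rcases le_or_gt t.length M.length with hlen | hlen
      · have : t <+: M := List.prefix_of_prefix_length_le ht (M.prefix_append _) hlen
        exact hMval t this
      · have hMt : M <+: t :=
          List.prefix_of_prefix_length_le (M.prefix_append _) ht hlen.le
        obtain ⟨r, rfl⟩ := hMt
        have hr : r <+: List.replicate n ((1 : ℤ), -k) :=
          (List.prefix_append_right_inj M).mp ht
        have hrep : r = List.replicate r.length ((1 : ℤ), -k) := by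
          refine List.eq_replicate_of_mem (fun q hq => List.eq_of_mem_replicate
            (hr.sublist.mem hq))
        have hrlen : (r.length : ℤ) ≤ n := by
          exact_mod_cast hr.length_le.trans_eq List.length_replicate
        rw [applyComp_append, hMz, hrep, applyComp_replicate]
        have hzn : (y : ℤ) = z - n * k := by
          have : z - y = k * n := hm
          linarith
        have : (y : ℤ) ≤ z - r.length * k := by
          rw [hzn]
          nlinarith
        have hy0 : (0 : ℤ) ≤ y := Int.natCast_nonneg y
        linarith
    · rw [applyComp_append, hMz, applyComp_replicate]
      have : z - y = k * n := hm
      linarith
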